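/- There exists an order ω on the two-sided stationary generalized Pascal-Bratteli diagram B̃ such that both the set of ω-minimal infinite paths and the set of ω-maximal infinite paths in X_B̃ have the cardinality of the continuum (2^ℵ₀). -/

import Mathlib

/-- An infinite path in the two-sided stationary generalized Pascal-Bratteli diagram `B̃`. -/
def IsPathZ (v : ℕ → ℤ) : Prop :=
  ∀ n, v (n + 1) = v n ∨ v (n + 1) = v n + 1

/-- The path `v` is minimal for the order `ω`. -/
def MinPathZ (ω : ℤ × ℕ → Bool) (v : ℕ → ℤ) : Prop :=
  ∀ n : ℕ, v (n + 1) - v n = (if ω (v (n + 1), n + 1) then 1 else 0)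

/-- The path `v` is maximal for the order `ω`. -/
def MaxPathZ (ω : ℤ × ℕ → Bool) (v : ℕ → ℤ) : Prop :=
  ∀ n : ℕ, v (n + 1) - v n = (if ω (v (n + 1), n + 1) then 0 else 1)

namespace PBAux

/-- numeric value of a bit -/
def bit (x : ℕ → Bool) (i : ℕ) : ℕ := if x i then 1 else 0

lemma bit_le (x : ℕ → Bool) (i : ℕ) : bit x i ≤ 1 := by
  unfold bit; split <;> omega

lemma bit_eq {x y : ℕ → Bool} {i j : ℕ} (h : bit x i = bit y j) : x i = y j := by
  unfold bit at h
  by_cases hx : x i <;> by_cases hy : y j <;> simp_all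

/-- binary value of the prefix `x 0 … x j` (big-endian). -/
def Q (x : ℕ → Bool) : ℕ → ℕ
  | 0 => bit x 0
  | j + 1 => 2 * Q x j + bit x (j + 1)

lemma Q_lt (x : ℕ → Bool) : ∀ j, Q x j < 2 ^ (j + 1)
  | 0 => by
    have := bit_le x 0
    show bit x 0 < 2 ^ 1
    omega
  | j + 1 => by
    have h1 := Q_lt x j
    have h2 := bit_le x (j + 1)
    have hp : (2:ℕ) ^ (j + 2) = 2 ^ (j + 1) * 2 := pow_succ 2 (j+1)
    show 2 * Q x j + bit x (j + 1) < 2 ^ (j + 2)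
    omega

lemma Q_inj (x y : ℕ → Bool) : ∀ j, Q x j = Q y j → ∀ i, i ≤ j → x i = y i := by
  intro j
  induction j with
  | zero =>
    intro h i hi
    have hi0 : i = 0 := by omega
    subst hi0
    exact bit_eq (h : bit x 0 = bit y 0)
  | succ j ih =>
    intro h i hi
    have hx := bit_le x (j + 1)
    have hy := bit_le y (j + 1)
    have h' : 2 * Q x j + bit x (j + 1) = 2 * Q y j + bit y (j + 1) := h
    have hb : bit x (j + 1) = bit y (j + 1) := by omega
    have hQ : Q x j = Q y j := by omega
    rcases Nat.lt_or_ge i (j + 1) with hlt | hge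
    · exact ih hQ i (by omega)
    · have hij : i = j + 1 := by omega
      subst hij
      exact bit_eq hb

/-- start level of block `j`. Block `j` consists of
transitions `n` with `S j ≤ n < S (j+1)` and has length `4^(j+1)`. -/
def S : ℕ → ℕ
  | 0 => 0
  | j + 1 => S j + 4 ^ (j + 1)

lemma three_S (j : ℕ) : 3 * S j + 4 = 4 ^ (j + 1) := by
  induction j with
  | zero => simp [S]
  | succ j ih =>
    have hp : (4:ℕ) ^ (j + 2) = 4 ^ (j + 1) * 4 := pow_succ 4 (j+1)
    show 3 * (S j + 4 ^ (j + 1)) + 4 = 4 ^ (j + 2)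
    omega

lemma S_succ (j : ℕ) : S (j + 1) = S j + 4 ^ (j + 1) := rfl

lemma S_lt_succ (j : ℕ) : S j < S (j + 1) := by
  have h4 : 0 < 4 ^ (j + 1) := Nat.pow_pos (by norm_num)
  rw [S_succ]
  omega

lemma S_mono : Monotone S :=
  monotone_nat_of_le_succ (fun j => (S_lt_succ j).le)

/-- the block containing transition `n`. -/
def blk (n : ℕ) : ℕ := Nat.log 4 (3 * n + 4) - 1

lemma blk_spec (n : ℕ) : S (blk n) ≤ n ∧ n < S (blk n + 1) := by
  have h0 : (3 * n + 4) ≠ 0 := by omega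
  have h1 : 4 ^ Nat.log 4 (3 * n + 4) ≤ 3 * n + 4 := Nat.pow_log_le_self 4 h0
  have h2 : 3 * n + 4 < 4 ^ (Nat.log 4 (3 * n + 4) + 1) :=
    Nat.lt_pow_succ_log_self (by norm_num) _
  have hL : 1 ≤ Nat.log 4 (3 * n + 4) := by
    rw [Nat.le_log_iff_pow_le (by norm_num) h0]
    show 4 ^ 1 ≤ 3 * n + 4
    omega
  have e1 : blk n + 1 = Nat.log 4 (3 * n + 4) := by unfold blk; omega
  constructor
  · have h3 := three_S (blk n)
    rw [e1] at h3
    omega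
  · have h3 := three_S (blk n + 1)
    have e2 : blk n + 1 + 1 = Nat.log 4 (3 * n + 4) + 1 := by omega
    rw [e2] at h3
    omega

lemma blk_eq {j n : ℕ} (h1 : S j ≤ n) (h2 : n < S (j + 1)) : blk n = j := by
  obtain ⟨g1, g2⟩ := blk_spec n
  rcases lt_trichotomy (blk n) j with h | h | h
  · have : S (blk n + 1) ≤ S j := S_mono (by omega)
    omega
  · exact h
  · have : S (j + 1) ≤ S (blk n) := S_mono (by omega)
    omega

/-- the "slow" path family: during block `j`, a path climbs from value `Q x j`
(binary value of prefix) to `2 * Q x j + bit x (j+1)` and then waits. -/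
def vv (x : ℕ → Bool) (n : ℕ) : ℕ :=
  min (Q x (blk n) + (n - S (blk n))) (2 * Q x (blk n) + bit x (blk n + 1))

lemma vv_succ (x : ℕ → Bool) (n : ℕ) :
    vv x (n + 1) =
      min (Q x (blk n) + (n - S (blk n) + 1)) (2 * Q x (blk n) + bit x (blk n + 1)) := by
  obtain ⟨h1, h2⟩ := blk_spec n
  by_cases hc : n + 1 < S (blk n + 1)
  · have hb : blk (n + 1) = blk n := blk_eq (by omega) hc
    unfold vv
    rw [hb]
    have he : n + 1 - S (blk n) = n - S (blk n) + 1 := by omega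
    rw [he]
  · have he : n + 1 = S (blk n + 1) := by omega
    have hb : blk (n + 1) = blk n + 1 := blk_eq (by omega) (by
      have := S_lt_succ (blk n + 1); omega)
    have hQlt := Q_lt x (blk n)
    have hble := bit_le x (blk n + 1)
    have hpow : (2:ℕ) ^ (blk n + 1) ≤ 4 ^ (blk n + 1) :=
      Nat.pow_le_pow_left (by norm_num) _
    have hlen : S (blk n + 1) = S (blk n) + 4 ^ (blk n + 1) := S_succ _
    have ht : n - S (blk n) + 1 = 4 ^ (blk n + 1) := by omega
    unfold vv
    rw [hb, ht]
    have hz : n + 1 - S (blk n + 1) = 0 := by omega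
    rw [hz]
    have hQs : Q x (blk n + 1) = 2 * Q x (blk n) + bit x (blk n + 1) := rfl
    have hb2 := bit_le x (blk n + 1 + 1)
    rw [hQs]
    omega

lemma vv_step (x : ℕ → Bool) (n : ℕ) :
    vv x (n + 1) = vv x n ∨ vv x (n + 1) = vv x n + 1 := by
  rw [vv_succ x n]
  unfold vv
  omega

/-- backward determinism: two slow paths at the same vertex at level `n+1`
were at the same vertex at level `n`. -/
lemma vv_consist (x y : ℕ → Bool) (n : ℕ) (h : vv x (n + 1) = vv y (n + 1)) :
    vv x n = vv y n := by
  have hx := vv_succ x n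
  have hy := vv_succ y n
  have bx := bit_le x (blk n + 1)
  have by' := bit_le y (blk n + 1)
  rw [hx, hy] at h
  unfold vv
  omega

lemma vv_at_S (x : ℕ → Bool) (j : ℕ) : vv x (S j) = Q x j := by
  have hb : blk (S j) = j := blk_eq le_rfl (S_lt_succ j)
  unfold vv
  rw [hb]
  have hz : S j - S j = 0 := by omega
  rw [hz]
  have := bit_le x (j + 1)
  omega

lemma vv_succ_le (x : ℕ → Bool) (n : ℕ) : vv x (n + 1) ≤ 2 ^ (blk n + 2) - 1 := by
  have h := vv_succ x n
  have hQ := Q_lt x (blk n)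
  have hb := bit_le x (blk n + 1)
  have hp : (2:ℕ) ^ (blk n + 2) = 2 ^ (blk n + 1) * 2 := pow_succ 2 _
  omega

lemma pow43 (j : ℕ) (hj : 1 ≤ j) : 2 ^ (j + 3) ≤ 4 ^ (j + 1) := by
  have h4 : (4:ℕ) ^ (j + 1) = 2 ^ (2 * (j + 1)) := by
    rw [show (4:ℕ) = 2 ^ 2 by norm_num, ← pow_mul]
  rw [h4]
  exact Nat.pow_le_pow_right (by norm_num) (by omega)

lemma S_bound : ∀ j, 2 ^ (j + 3) ≤ S j + 21
  | 0 => by norm_num [S]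
  | 1 => by norm_num [S]
  | (j + 2) => by
    have ih : 2 ^ (j + 4) ≤ S (j + 1) + 21 := S_bound (j + 1)
    have hS : S (j + 2) = S (j + 1) + 4 ^ (j + 2) := S_succ _
    have h43 : 2 ^ (j + 4) ≤ 4 ^ (j + 2) := pow43 (j + 1) (by omega)
    have hp : (2:ℕ) ^ (j + 5) = 2 ^ (j + 4) * 2 := pow_succ 2 _
    show 2 ^ (j + 5) ≤ S (j + 2) + 21
    omega

/-- the fast and slow families are disjoint at every positive level. -/
lemma vv_disj (x y : ℕ → Bool) (n : ℕ) : vv x (n + 1) + vv y (n + 1) < n + 21 := by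
  have hx := vv_succ_le x n
  have hy := vv_succ_le y n
  have hs := S_bound (blk n)
  have h1 := (blk_spec n).1
  have hp : (2:ℕ) ^ (blk n + 3) = 2 ^ (blk n + 2) * 2 := pow_succ 2 _
  omega

/-- the slow family (maximal paths). -/
def Vp (x : ℕ → Bool) : ℕ → ℤ := fun n => (vv x n : ℤ)

/-- the fast family (minimal paths). -/
def Fp (x : ℕ → Bool) : ℕ → ℤ := fun n => (n : ℤ) + 20 - (vv x n : ℤ)

open Classical in
/-- the order: `true` exactly where some fast path steps in, or some slow path stays. -/
noncomputable def om : ℤ × ℕ → Bool := fun p =>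
  if (∃ x : ℕ → Bool, Fp x p.2 = p.1 ∧ Fp x (p.2 - 1) = p.1 - 1) ∨
     (∃ x : ℕ → Bool, Vp x p.2 = p.1 ∧ Vp x (p.2 - 1) = p.1) then true else false

open Classical in
lemma om_eval (a : ℤ) (k : ℕ) :
    om (a, k) =
      if (∃ x : ℕ → Bool, Fp x k = a ∧ Fp x (k - 1) = a - 1) ∨
         (∃ x : ℕ → Bool, Vp x k = a ∧ Vp x (k - 1) = a) then true else false := rfl

lemma isPath_F (x : ℕ → Bool) : IsPathZ (Fp x) := by
  intro n
  rcases vv_step x n with h | h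
  · right; unfold Fp; push_cast; omega
  · left; unfold Fp; push_cast; omega

lemma isPath_V (x : ℕ → Bool) : IsPathZ (Vp x) := by
  intro n
  rcases vv_step x n with h | h
  · left; unfold Vp; omega
  · right; unfold Vp; omega

lemma min_F (x : ℕ → Bool) : MinPathZ om (Fp x) := by
  intro n
  have hred : n + 1 - 1 = n := rfl
  rcases vv_step x n with hstay | hstep
  · -- vv stays, so Fp steps; show om = true
    have hom : om (Fp x (n + 1), n + 1) = true := by
      rw [om_eval, if_pos]
      left
      refine ⟨x, rfl, ?_⟩
      rw [hred]
      unfold Fp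
      push_cast
      omega
    rw [hom]
    simp only [if_true]
    unfold Fp
    push_cast
    omega
  · -- vv steps, so Fp stays; show om = false
    have hom : om (Fp x (n + 1), n + 1) = false := by
      rw [om_eval, if_neg]
      rintro (⟨y, h1, h2⟩ | ⟨y, h1, h2⟩)
      · -- another fast path steps into the same vertex: impossible by consistency
        rw [hred] at h2
        have hv : vv y (n + 1) = vv x (n + 1) := by
          unfold Fp at h1; omega
        have hn : vv y n = vv x n := vv_consist y x n hv
        unfold Fp at h1 h2
        omega
      · -- a slow path at this vertex: impossible by disjointness
        have hd := vv_disj x y n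
        unfold Fp Vp at h1
        omega
    rw [hom]
    simp only [Bool.false_eq_true, if_false]
    unfold Fp
    push_cast
    omega

lemma max_V (x : ℕ → Bool) : MaxPathZ om (Vp x) := by
  intro n
  have hred : n + 1 - 1 = n := rfl
  rcases vv_step x n with hstay | hstep
  · -- vv stays: om must be true
    have hom : om (Vp x (n + 1), n + 1) = true := by
      rw [om_eval, if_pos]
      right
      refine ⟨x, rfl, ?_⟩
      rw [hred]
      unfold Vp
      omega
    rw [hom]
    simp only [if_true]
    unfold Vp
    omega
  · -- vv steps: om must be false
    have hom : om (Vp x (n + 1), n + 1) = false := by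
      rw [om_eval, if_neg]
      rintro (⟨y, h1, h2⟩ | ⟨y, h1, h2⟩)
      · -- a fast path steps into this vertex: disjointness
        have hd := vv_disj y x n
        unfold Fp Vp at h1
        omega
      · -- a slow path stays at this vertex: consistency
        rw [hred] at h2
        have hv : vv y (n + 1) = vv x (n + 1) := by
          unfold Vp at h1; omega
        have hn : vv y n = vv x n := vv_consist y x n hv
        unfold Vp at h1 h2
        omega
    rw [hom]
    simp only [Bool.false_eq_true, if_false]
    unfold Vp
    omega

lemma vv_eq_of_funeq {x y : ℕ → Bool} (h : ∀ n, vv x n = vv y n) : x = y := by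
  funext i
  have hQ : Q x i = Q y i := by
    have := h (S i)
    rwa [vv_at_S, vv_at_S] at this
  exact Q_inj x y i hQ i le_rfl

lemma F_inj : Function.Injective Fp := by
  intro x y h
  apply vv_eq_of_funeq
  intro n
  have := congrFun h n
  unfold Fp at this
  omega

lemma V_inj : Function.Injective Vp := by
  intro x y h
  apply vv_eq_of_funeq
  intro n
  have := congrFun h n
  unfold Vp at this
  omega

open Cardinal in
lemma mk_nat_int : #(ℕ → ℤ) = Cardinal.continuum := by
  rw [Cardinal.mk_arrow]
  simp [Cardinal.mk_int, Cardinal.mk_nat, Cardinal.aleph0_power_aleph0]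

open Cardinal in
lemma mk_nat_bool : #(ℕ → Bool) = Cardinal.continuum := by
  rw [Cardinal.mk_arrow]
  simp [Cardinal.mk_bool, Cardinal.mk_nat, Cardinal.two_power_aleph0]

open Cardinal in
lemma card_of_family {P : (ℕ → ℤ) → Prop} (f : (ℕ → Bool) → (ℕ → ℤ))
    (hf : Function.Injective f) (hP : ∀ x, P (f x)) :
    #{v : ℕ → ℤ | P v} = Cardinal.continuum := by
  apply le_antisymm
  · calc #{v : ℕ → ℤ | P v} ≤ #(ℕ → ℤ) := Cardinal.mk_set_le _
    _ = Cardinal.continuum := mk_nat_int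
  · have hle : #(ℕ → Bool) ≤ #{v : ℕ → ℤ | P v} := by
      apply Cardinal.mk_le_of_injective (f := fun x => (⟨f x, hP x⟩ : {v : ℕ → ℤ | P v}))
      intro a b hab
      exact hf (congrArg Subtype.val hab)
    rwa [mk_nat_bool] at hle

end PBAux

/-- there is an order on `B̃` with continuum many minimal infinite paths and
continuum many maximal infinite paths. -/
theorem two_sided_order_continuum_min_max :
    ∃ ω : ℤ × ℕ → Bool,
      Cardinal.mk {v : ℕ → ℤ | IsPathZ v ∧ MinPathZ ω v} = Cardinal.continuum ∧
      Cardinal.mk {v : ℕ → ℤ | IsPathZ v ∧ MaxPathZ ω v} = Cardinal.continuum := by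
  refine ⟨PBAux.om, ?_, ?_⟩
  · exact PBAux.card_of_family PBAux.Fp PBAux.F_inj
      (fun x => ⟨PBAux.isPath_F x, PBAux.min_F x⟩)
  · exact PBAux.card_of_family PBAux.Vp PBAux.V_inj
      (fun x => ⟨PBAux.isPath_V x, PBAux.max_V x⟩)
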